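/- Let K be a category and let f : Z → X and g : Z → Y be arrows of ↻K with the same domain. If the arrows e(f) : Z → X and e(g) : Z → Y admit a pushout in K, then f and g can be properly amalgamated in ↻K: there exist an object W and ↻K-arrows h : X → W, k : Y → W with h∘f = k∘g in ↻K and with e(g)∘r(f) = r(k)∘e(h) and e(f)∘r(g) = r(h)∘e(k) in K. -/

import Mathlib

open CategoryTheory

universe v u

variable {C : Type u} [Category.{v} C]

/-- An arrow of the category `↻K`: a pair `(e, r)` of arrows of `K` with `r ∘ e = id`. -/
@[ext]
structure RPHom (X Y : C) : Type v where
  e : X ⟶ Y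
  r : Y ⟶ X
  retract : e ≫ r = 𝟙 X

/-- The category `↻K`: same objects as `K`, arrows are retractive pairs, composed by
`(e g ∘ e f, r f ∘ r g)`. -/
def RP (C : Type u) [Category.{v} C] : Type u := C

instance : Category.{v} (RP C) where
  Hom X Y := RPHom (C := C) X Y
  id X := ⟨𝟙 (show C from X), 𝟙 (show C from X), Category.comp_id (obj := C) _⟩
  comp {X Y Z} f g := ⟨RPHom.e f ≫ RPHom.e g, RPHom.r g ≫ RPHom.r f, by
    exact (Category.assoc (obj := C) _ _ _).trans
      ((congrArg (RPHom.e f ≫ ·) ((Category.assoc (obj := C) _ _ _).symm.trans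
        ((congrArg (· ≫ RPHom.r f) (RPHom.retract g)).trans (Category.id_comp (obj := C) _)))).trans
        (RPHom.retract f))⟩
  id_comp f := by
    apply RPHom.ext
    · exact Category.id_comp (obj := C) _
    · exact Category.comp_id (obj := C) _
  comp_id f := by
    apply RPHom.ext
    · exact Category.comp_id (obj := C) _
    · exact Category.id_comp (obj := C) _
  assoc f g h := by
    apply RPHom.ext
    · exact Category.assoc (obj := C) _ _ _
    · exact (Category.assoc (obj := C) _ _ _).symm

/-- if the `e`-components of two `↻K`-arrows `f : Z → X`, `g : Z → Y` admit a
pushout in `K`, then `f` and `g` can be properly amalgamated in `↻K`: there are `↻K`-arrows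
`h : X → W`, `k : Y → W` with `h ∘ f = k ∘ g` in `↻K` (i.e. `e h ∘ e f = e k ∘ e g` and
`r f ∘ r h = r g ∘ r k`), and moreover `e g ∘ r f = r k ∘ e h` and `e f ∘ r g = r h ∘ e k`
in `K`. -/
theorem rp_proper_amalgamation_of_hasPushout (Z X Y : C)
    (f : RPHom Z X) (g : RPHom Z Y) [Limits.HasPushout f.e g.e] :
    ∃ (W : C) (h : RPHom X W) (k : RPHom Y W),
      f.e ≫ h.e = g.e ≫ k.e ∧ h.r ≫ f.r = k.r ≫ g.r ∧
      f.r ≫ g.e = h.e ≫ k.r ∧ g.r ≫ f.e = k.e ≫ h.r := by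

  refine ⟨Limits.pushout f.e g.e,
    ⟨Limits.pushout.inl f.e g.e,
      Limits.pushout.desc (𝟙 X) (g.r ≫ f.e) (by simp [← Category.assoc, g.retract]),
      by rw [Limits.pushout.inl_desc]⟩,
    ⟨Limits.pushout.inr f.e g.e,
      Limits.pushout.desc (f.r ≫ g.e) (𝟙 Y) (by simp [← Category.assoc, f.retract]),
      by rw [Limits.pushout.inr_desc]⟩,
    Limits.pushout.condition, ?_, ?_, ?_⟩
  · apply Limits.pushout.hom_ext <;>
      simp [← Category.assoc, Limits.pushout.inl_desc, Limits.pushout.inr_desc] <;>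
      simp [Category.assoc, f.retract, g.retract]
  · rw [Limits.pushout.inl_desc]
  · rw [Limits.pushout.inr_desc]
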